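/- Let q_1,...,q_m be nonnegative reals summing to 1 and let π be a uniformly random permutation of [m]. For every ε>0 there exists δ>0 (independent of m and the q_i) such that if max_i q_i ≤ δ, then the probability that max_{1≤i≤m} | Σ_{j=1}^i (q_{π(j)} − 1/m) | > ε is less than ε. -/

import Mathlib

open Finset

namespace AldousAux

/-- The first `n` positions of `Fin m`. -/
def B (m n : ℕ) : Finset (Fin m) := Finset.univ.filter (fun j => (j : ℕ) < n)

lemma mem_B {m n : ℕ} {j : Fin m} : j ∈ B m n ↔ (j : ℕ) < n := by simp [B]

lemma card_B {m n : ℕ} (h : n ≤ m) : (B m n).card = n := by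
  have hB : B m n = (Finset.range n).attachFin
      (fun a ha => lt_of_lt_of_le (Finset.mem_range.mp ha) h) := by
    ext j
    simp [B, Finset.mem_attachFin]
  rw [hB, Finset.card_attachFin, Finset.card_range]

lemma nat_lt_div_succ_mul (a b : ℕ) (hb : 0 < b) : a < (a / b + 1) * b := by
  have h := Nat.div_add_mod a b
  have h2 := Nat.mod_lt a hb
  calc a = b * (a / b) + a % b := h.symm
    _ < b * (a / b) + b := by omega
    _ = (a / b + 1) * b := by ring

/-- Lower Lipschitz bound for partial sums when all terms are `≥ -1/m`. -/
lemma sum_B_ge {m : ℕ} (x : Fin m → ℝ) (hx : ∀ a, -(1 / (m : ℝ)) ≤ x a)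
    (π : Equiv.Perm (Fin m)) {a b : ℕ} (hab : a ≤ b) (hbm : b ≤ m) :
    (∑ j ∈ B m a, x (π j)) - ((b : ℝ) - a) / m ≤ ∑ j ∈ B m b, x (π j) := by
  have hsub : B m a ⊆ B m b := fun j hj => mem_B.mpr (lt_of_lt_of_le (mem_B.mp hj) hab)
  have hsdiff : ∑ j ∈ B m b \ B m a, x (π j) + ∑ j ∈ B m a, x (π j)
      = ∑ j ∈ B m b, x (π j) := Finset.sum_sdiff hsub
  have hcard : (((B m b \ B m a).card : ℕ) : ℝ) = (b : ℝ) - a := by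
    rw [Finset.card_sdiff_of_subset hsub, card_B hbm, card_B (hab.trans hbm)]
    push_cast [Nat.cast_sub hab]
    ring
  have hlow : (((B m b \ B m a).card : ℕ) : ℝ) * (-(1 / (m : ℝ)))
      ≤ ∑ j ∈ B m b \ B m a, x (π j) := by
    have h := Finset.card_nsmul_le_sum (B m b \ B m a) (fun j => x (π j)) (-(1 / (m : ℝ)))
      (fun j _ => hx (π j))
    simpa [nsmul_eq_mul] using h
  rw [hcard] at hlow
  have hring : ((b : ℝ) - a) * (-(1 / (m : ℝ))) = -(((b : ℝ) - a) / m) := by ring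
  rw [hring] at hlow
  linarith

/-- Chebyshev-type counting bound. -/
lemma cheb {α : Type*} [Fintype α] (f : α → ℝ) (c : ℝ) (hc : 0 ≤ c)
    [DecidablePred fun a => c < |f a|] :
    ((Finset.univ.filter (fun a => c < |f a|)).card : ℝ) * c ^ 2 ≤ ∑ a, f a ^ 2 := by
  calc ((Finset.univ.filter (fun a => c < |f a|)).card : ℝ) * c ^ 2
      = ∑ _a ∈ Finset.univ.filter (fun a => c < |f a|), c ^ 2 := by
        rw [Finset.sum_const, nsmul_eq_mul]
    _ ≤ ∑ a ∈ Finset.univ.filter (fun a => c < |f a|), f a ^ 2 := by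
        refine Finset.sum_le_sum fun a ha => ?_
        have h := (Finset.mem_filter.mp ha).2
        have h2 : c ^ 2 ≤ |f a| ^ 2 := pow_le_pow_left₀ hc h.le 2
        simpa [sq_abs] using h2
    _ ≤ ∑ a, f a ^ 2 := Finset.sum_le_sum_of_subset_of_nonneg (Finset.subset_univ _)
        (fun a _ _ => sq_nonneg _)

/-- Pair correlation over random permutations. -/
noncomputable def C {m : ℕ} (x : Fin m → ℝ) (j j' : Fin m) : ℝ :=
  ∑ π : Equiv.Perm (Fin m), x (π j) * x (π j')

lemma C_reindex {m : ℕ} (x : Fin m → ℝ) (σ : Equiv.Perm (Fin m)) (j j' : Fin m) :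
    C x (σ j) (σ j') = C x j j' := by
  unfold C
  exact Fintype.sum_equiv (Equiv.mulRight σ)
    (fun π => x (π (σ j)) * x (π (σ j'))) (fun π => x (π j) * x (π j'))
    (fun π => rfl)

lemma C_diag_const {m : ℕ} (x : Fin m → ℝ) (j0 j : Fin m) : C x j j = C x j0 j0 := by
  have h := C_reindex x (Equiv.swap j0 j) j0 j0
  simpa [Equiv.swap_apply_left] using h

lemma C_off_const {m : ℕ} (x : Fin m → ℝ) {j0 j1 j j' : Fin m} (hj01 : j0 ≠ j1)
    (hjj : j ≠ j') : C x j j' = C x j0 j1 := by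
  set τ := Equiv.swap j0 j with hτ
  have hτj0 : τ j0 = j := Equiv.swap_apply_left j0 j
  set b := τ j1 with hb
  have hbj : b ≠ j := by
    intro h
    exact hj01 (τ.injective (h.trans hτj0.symm)).symm
  set σ := (Equiv.swap b j') * τ with hσ
  have hσ0 : σ j0 = j := by
    rw [hσ, Equiv.Perm.mul_apply, hτj0, Equiv.swap_apply_of_ne_of_ne hbj.symm hjj]
  have hσ1 : σ j1 = j' := by
    rw [hσ, Equiv.Perm.mul_apply, ← hb, Equiv.swap_apply_left]
  have h := C_reindex x σ j0 j1
  rw [hσ0, hσ1] at h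
  exact h

/-- Second moment of the partial sum over a uniformly random permutation. -/
theorem second_moment {m : ℕ} (hm : 2 ≤ m) (x : Fin m → ℝ)
    (hsum : ∑ a, x a = 0) {n : ℕ} (hn1 : 1 ≤ n) (hnm : n ≤ m) :
    ∑ π : Equiv.Perm (Fin m), (∑ j ∈ B m n, x (π j)) ^ 2
      ≤ (Fintype.card (Equiv.Perm (Fin m)) : ℝ) * ∑ a, x a * x a := by
  classical
  set N : ℕ := Fintype.card (Equiv.Perm (Fin m)) with hN
  set V : ℝ := ∑ a, x a * x a with hV
  have hV0 : 0 ≤ V := Finset.sum_nonneg fun a _ => mul_self_nonneg _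
  have hN0 : 0 ≤ (N : ℝ) := Nat.cast_nonneg _
  obtain ⟨j0, j1, hj01⟩ : ∃ j0 j1 : Fin m, j0 ≠ j1 := by
    refine ⟨⟨0, by omega⟩, ⟨1, by omega⟩, ?_⟩
    simp [Fin.ext_iff]
  have sum_diag : (m : ℝ) * C x j0 j0 = (N : ℝ) * V := by
    have h1 : ∑ j : Fin m, C x j j = (m : ℝ) * C x j0 j0 := by
      rw [Finset.sum_congr rfl (fun j _ => C_diag_const x j0 j)]
      simp [Finset.sum_const, Finset.card_univ, nsmul_eq_mul]
    have h2 : ∑ j : Fin m, C x j j = (N : ℝ) * V := by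
      unfold C
      rw [Finset.sum_comm]
      have h3 : ∀ π : Equiv.Perm (Fin m), ∑ j, x (π j) * x (π j) = V :=
        fun π => Equiv.sum_comp π (fun a => x a * x a)
      rw [Finset.sum_congr rfl (fun π _ => h3 π)]
      simp [Finset.sum_const, Finset.card_univ, nsmul_eq_mul, hN]
    linarith
  have sum_all : (m : ℝ) * C x j0 j0 + ((m : ℝ) * m - m) * C x j0 j1 = 0 := by
    have key : ∀ π : Equiv.Perm (Fin m), (∑ j, x (π j)) = 0 := by
      intro π
      rw [Equiv.sum_comp π x, hsum]
    have h1 : ∑ j : Fin m, ∑ j' : Fin m, C x j j' = 0 := by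
      unfold C
      calc ∑ j : Fin m, ∑ j' : Fin m, ∑ π : Equiv.Perm (Fin m), x (π j) * x (π j')
          = ∑ π : Equiv.Perm (Fin m), ∑ j : Fin m, ∑ j' : Fin m, x (π j) * x (π j') :=
            (Finset.sum_congr rfl (fun j _ => Finset.sum_comm)).trans Finset.sum_comm
        _ = ∑ π : Equiv.Perm (Fin m), (∑ j, x (π j)) * (∑ j', x (π j')) := by
            exact Finset.sum_congr rfl fun π _ => (Finset.sum_mul_sum _ _ _ _).symm
        _ = 0 := by simp [key]
    have h2 : ∑ j : Fin m, ∑ j' : Fin m, C x j j'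
        = (m : ℝ) * (C x j0 j0 + ((m : ℝ) - 1) * C x j0 j1) := by
      have inner : ∀ j : Fin m, ∑ j' : Fin m, C x j j'
          = C x j0 j0 + ((m : ℝ) - 1) * C x j0 j1 := by
        intro j
        have hpt : ∀ j' : Fin m, C x j j'
            = (if j' = j then C x j0 j0 - C x j0 j1 else 0) + C x j0 j1 := by
          intro j'
          by_cases h : j' = j
          · subst h
            simp [C_diag_const x j0 j']
          · simp [h, C_off_const x hj01 (Ne.symm h)]
        rw [Finset.sum_congr rfl (fun j' _ => hpt j')]
        rw [Finset.sum_add_distrib, Finset.sum_ite_eq' Finset.univ j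
          (fun _ => C x j0 j0 - C x j0 j1)]
        simp only [Finset.mem_univ, if_true, Finset.sum_const, Finset.card_univ,
          Fintype.card_fin, nsmul_eq_mul]
        ring
      rw [Finset.sum_congr rfl (fun j _ => inner j)]
      simp only [Finset.sum_const, Finset.card_univ, Fintype.card_fin, nsmul_eq_mul]
    rw [h2] at h1
    nlinarith [h1]
  have hBcard : (B m n).card = n := card_B hnm
  have main : ∑ π : Equiv.Perm (Fin m), (∑ j ∈ B m n, x (π j)) ^ 2
      = (n : ℝ) * C x j0 j0 + ((n : ℝ) * n - n) * C x j0 j1 := by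
    calc ∑ π : Equiv.Perm (Fin m), (∑ j ∈ B m n, x (π j)) ^ 2
        = ∑ π : Equiv.Perm (Fin m), ∑ j ∈ B m n, ∑ j' ∈ B m n, x (π j) * x (π j') := by
          refine Finset.sum_congr rfl fun π _ => ?_
          rw [sq, Finset.sum_mul_sum]
      _ = ∑ j ∈ B m n, ∑ j' ∈ B m n, C x j j' := by
          unfold C
          exact Finset.sum_comm.trans (Finset.sum_congr rfl fun j _ => Finset.sum_comm)
      _ = (n : ℝ) * C x j0 j0 + ((n : ℝ) * n - n) * C x j0 j1 := by
          have inner : ∀ j ∈ B m n, ∑ j' ∈ B m n, C x j j'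
              = C x j0 j0 + ((n : ℝ) - 1) * C x j0 j1 := by
            intro j hj
            have hpt : ∀ j' : Fin m, C x j j'
                = (if j' = j then C x j0 j0 - C x j0 j1 else 0) + C x j0 j1 := by
              intro j'
              by_cases h : j' = j
              · subst h
                simp [C_diag_const x j0 j']
              · simp [h, C_off_const x hj01 (Ne.symm h)]
            rw [Finset.sum_congr rfl (fun j' _ => hpt j')]
            rw [Finset.sum_add_distrib, Finset.sum_ite_eq' (B m n) j
              (fun _ => C x j0 j0 - C x j0 j1), if_pos hj]
            simp only [Finset.sum_const, hBcard, nsmul_eq_mul]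
            ring
          rw [Finset.sum_congr rfl inner]
          simp only [Finset.sum_const, hBcard, nsmul_eq_mul]
          ring
  rw [main]
  have hC01 : ((m : ℝ) * m - m) * C x j0 j1 = -((N : ℝ) * V) := by linarith
  have hm' : (2 : ℝ) ≤ m := by exact_mod_cast hm
  have hn1' : (1 : ℝ) ≤ n := by exact_mod_cast hn1
  have hnm' : (n : ℝ) ≤ m := by exact_mod_cast hnm
  have hMM : (0 : ℝ) < (m : ℝ) * ((m : ℝ) - 1) := by nlinarith
  have key : (n : ℝ) * ((m : ℝ) - (n : ℝ)) ≤ (m : ℝ) * ((m : ℝ) - 1) := by nlinarith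
  have hmul : ((n : ℝ) * C x j0 j0 + ((n : ℝ) * n - n) * C x j0 j1)
        * ((m : ℝ) * ((m : ℝ) - 1))
      ≤ ((N : ℝ) * V) * ((m : ℝ) * ((m : ℝ) - 1)) := by
    have expand : ((n : ℝ) * C x j0 j0 + ((n : ℝ) * n - n) * C x j0 j1)
          * ((m : ℝ) * ((m : ℝ) - 1))
        = (n : ℝ) * ((m : ℝ) - 1) * ((m : ℝ) * C x j0 j0)
          + ((n : ℝ) * n - n) * (((m : ℝ) * m - m) * C x j0 j1) := by ring
    rw [expand, sum_diag, hC01]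
    have hNV0 : 0 ≤ (N : ℝ) * V := mul_nonneg hN0 hV0
    nlinarith [mul_le_mul_of_nonneg_left key hNV0]
  exact le_of_mul_le_mul_right hmul hMM

end AldousAux

open AldousAux

open scoped Classical

set_option maxHeartbeats 1000000 in
/-- Aldous. For every `ε > 0` there exists `δ > 0`, independent of
`m` and of the `qᵢ`, such that for every `m ≥ 1` and all nonnegative reals
`q₁, …, q_m` summing to `1` with `max_i q_i ≤ δ`, a uniformly random permutation `π` of
`[m]` satisfies `max_{1 ≤ i ≤ m} |Σ_{j=1}^i (q_{π(j)} − 1/m)| > ε` with probability less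
than `ε`. -/
theorem exchangeable_partial_sums_concentration :
    ∀ ε : ℝ, 0 < ε → ∃ δ : ℝ, 0 < δ ∧
      ∀ m : ℕ, 0 < m → ∀ q : Fin m → ℝ,
        (∀ i, 0 ≤ q i) → (∑ i, q i = 1) → (∀ i, q i ≤ δ) →
        ((Finset.univ.filter (fun π : Equiv.Perm (Fin m) =>
            ∃ i : Fin m,
              ε < |∑ j ∈ Finset.Iic i, (q (π j) - 1 / (m : ℝ))|)).card : ℝ)
          / (Fintype.card (Equiv.Perm (Fin m)) : ℝ) < ε := by
  intro ε hε
  set e := min ε 1 with he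
  have hepos : 0 < e := lt_min hε one_pos
  have he1 : e ≤ 1 := min_le_right _ _
  have heε : e ≤ ε := min_le_left _ _
  refine ⟨e ^ 4 / 24, by positivity, ?_⟩
  intro m hm q hq hsum hqd
  set δ : ℝ := e ^ 4 / 24 with hδ
  have hδpos : 0 < δ := by positivity
  have hNpos : 0 < (Fintype.card (Equiv.Perm (Fin m)) : ℝ) := by
    exact_mod_cast Fintype.card_pos
  have hmono : (Finset.univ.filter (fun π : Equiv.Perm (Fin m) =>
        ∃ i : Fin m, ε < |∑ j ∈ Finset.Iic i, (q (π j) - 1 / (m : ℝ))|))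
      ⊆ (Finset.univ.filter (fun π : Equiv.Perm (Fin m) =>
        ∃ i : Fin m, e < |∑ j ∈ Finset.Iic i, (q (π j) - 1 / (m : ℝ))|)) := by
    intro π hπ
    simp only [Finset.mem_filter] at *
    exact ⟨hπ.1, hπ.2.imp (fun i hi => lt_of_le_of_lt heε hi)⟩
  suffices hkey : ((Finset.univ.filter (fun π : Equiv.Perm (Fin m) =>
        ∃ i : Fin m, e < |∑ j ∈ Finset.Iic i, (q (π j) - 1 / (m : ℝ))|)).card : ℝ)
        / (Fintype.card (Equiv.Perm (Fin m)) : ℝ) < e by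
    refine lt_of_le_of_lt ?_ (lt_of_lt_of_le hkey heε)
    exact div_le_div_of_nonneg_right
      (by exact_mod_cast Finset.card_le_card hmono) hNpos.le |>.trans_eq rfl
  have hmR : (0 : ℝ) < m := by exact_mod_cast hm
  set x : Fin m → ℝ := fun a => q a - 1 / (m : ℝ) with hx
  have hmδ : (1 : ℝ) ≤ m * δ := by
    rw [← hsum]
    calc ∑ i, q i ≤ ∑ _i : Fin m, δ := Finset.sum_le_sum fun i _ => hqd i
      _ = m * δ := by simp [Finset.sum_const, Finset.card_univ, nsmul_eq_mul]
  have hδle : δ ≤ 1 / 24 := by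
    have h : e ^ 4 ≤ 1 := pow_le_one₀ hepos.le he1
    rw [hδ]; linarith
  have hm24 : (24 : ℝ) ≤ m := by nlinarith
  have hm2 : 2 ≤ m := by exact_mod_cast (by linarith : (2 : ℝ) ≤ (m : ℝ))
  have hxsum : ∑ a, x a = 0 := by
    rw [hx]
    rw [Finset.sum_sub_distrib, hsum, Finset.sum_const, Finset.card_univ, Fintype.card_fin,
      nsmul_eq_mul]
    field_simp
    ring
  have hxlow : ∀ a, -(1 / (m : ℝ)) ≤ x a := by
    intro a
    have := hq a
    simp only [hx]
    linarith
  have hVle : ∑ a, x a * x a ≤ δ := by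
    have hxx : ∑ a, x a * x a = (∑ a, q a * q a) - 1 / m := by
      have hpt : ∀ a : Fin m, x a * x a
          = q a * q a - (2 / m) * q a + (1 / m) * (1 / m) := by
        intro a
        simp only [hx]
        ring
      rw [Finset.sum_congr rfl (fun a _ => hpt a)]
      rw [Finset.sum_add_distrib, Finset.sum_sub_distrib, ← Finset.mul_sum, hsum,
        Finset.sum_const, Finset.card_univ, Fintype.card_fin, nsmul_eq_mul]
      field_simp
      ring
    have hqq : ∑ a, q a * q a ≤ δ := by
      calc ∑ a, q a * q a ≤ ∑ a, δ * q a :=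
            Finset.sum_le_sum fun a _ => mul_le_mul_of_nonneg_right (hqd a) (hq a)
        _ = δ := by rw [← Finset.mul_sum, hsum, mul_one]
    rw [hxx]
    have h0 : 0 ≤ 1 / (m : ℝ) := by positivity
    linarith
  set L : ℕ := ⌊e * m / 2⌋₊ + 1 with hL
  set T : ℕ := m / L + 1 with hT
  have hLpos : 0 < L := Nat.succ_pos _
  have hLreal : e * m / 2 < (L : ℝ) := by
    rw [hL]
    push_cast
    exact Nat.lt_floor_add_one _
  have hgap : ((L : ℝ) - 1) / m ≤ e / 2 := by
    have h1 : ((L : ℝ) - 1) = (⌊e * m / 2⌋₊ : ℝ) := by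
      rw [hL]; push_cast; ring
    rw [h1, div_le_iff₀ hmR]
    calc (⌊e * m / 2⌋₊ : ℝ) ≤ e * m / 2 := Nat.floor_le (by positivity)
      _ = e / 2 * m := by ring
  have count : ∀ n : ℕ, 1 ≤ n → n ≤ m →
      ((Finset.univ.filter (fun π : Equiv.Perm (Fin m) =>
        e / 2 < |∑ j ∈ B m n, x (π j)|)).card : ℝ)
        ≤ (Fintype.card (Equiv.Perm (Fin m)) : ℝ) * δ / (e / 2) ^ 2 := by
    intro n hn1 hnm
    have h1 := cheb (fun π : Equiv.Perm (Fin m) => ∑ j ∈ B m n, x (π j)) (e / 2)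
      (by positivity)
    have h2 := second_moment hm2 x hxsum hn1 hnm
    have h3 : (Fintype.card (Equiv.Perm (Fin m)) : ℝ) * (∑ a, x a * x a)
        ≤ (Fintype.card (Equiv.Perm (Fin m)) : ℝ) * δ :=
      mul_le_mul_of_nonneg_left hVle hNpos.le
    rw [le_div_iff₀ (by positivity : (0 : ℝ) < (e / 2) ^ 2)]
    calc ((Finset.univ.filter (fun π : Equiv.Perm (Fin m) =>
          e / 2 < |∑ j ∈ B m n, x (π j)|)).card : ℝ) * (e / 2) ^ 2
        ≤ ∑ π : Equiv.Perm (Fin m), (∑ j ∈ B m n, x (π j)) ^ 2 := h1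
      _ ≤ (Fintype.card (Equiv.Perm (Fin m)) : ℝ) * δ := h2.trans h3
  have hincl : (Finset.univ.filter (fun π : Equiv.Perm (Fin m) =>
        ∃ i : Fin m, e < |∑ j ∈ Finset.Iic i, (q (π j) - 1 / (m : ℝ))|))
      ⊆ (Finset.Icc 1 T).biUnion (fun t => Finset.univ.filter
          (fun π : Equiv.Perm (Fin m) =>
            e / 2 < |∑ j ∈ B m (min (t * L) m), x (π j)|)) := by
    intro π hπ
    obtain ⟨i, hi⟩ := (Finset.mem_filter.mp hπ).2
    set n : ℕ := (i : ℕ) + 1 with hn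
    have hn1 : 1 ≤ n := Nat.succ_le_succ (Nat.zero_le _)
    have hnm : n ≤ m := i.isLt
    have hIic : (Finset.Iic i) = B m n := by
      ext j
      simp only [Finset.mem_Iic, mem_B, Fin.le_def, hn]
      omega
    rw [hIic] at hi
    have hi' : e < |∑ j ∈ B m n, x (π j)| := hi
    rw [lt_abs] at hi'
    rcases hi' with hup | hdown
    · -- upward crossing: next grid point above
      set t : ℕ := (n + L - 1) / L with ht
      obtain ⟨u, hu⟩ : ∃ u, u = t * L := ⟨_, rfl⟩
      have h1 : u ≤ n + L - 1 := by rw [hu]; exact Nat.div_mul_le_self _ _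
      have h2 : n + L - 1 < u + L := by
        have := nat_lt_div_succ_mul (n + L - 1) L hLpos
        rw [hu, ht]
        calc n + L - 1 < ((n + L - 1) / L + 1) * L := this
          _ = (n + L - 1) / L * L + L := by ring
      have hnt : n ≤ u := by omega
      have ht1 : 1 ≤ t := by
        rcases Nat.eq_zero_or_pos t with h0 | h
        · exfalso
          rw [h0, zero_mul] at hu
          omega
        · exact h
      have htT : t ≤ T := by
        rw [ht, hT]
        have h5 : (n + L - 1) / L ≤ (m + L) / L := Nat.div_le_div_right (by omega)
        rwa [Nat.add_div_right _ hLpos] at h5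
      have hming : min (t * L) m = min u m := by rw [hu]
      set g : ℕ := min u m with hg
      have hng : n ≤ g := le_min hnt hnm
      have hgm : g ≤ m := min_le_right _ _
      have hgn : g ≤ n + (L - 1) := by
        have h6 : g ≤ u := min_le_left _ _
        omega
      have hgapR : ((g : ℝ) - n) / m ≤ e / 2 := by
        refine le_trans ?_ hgap
        have h7 : (g : ℝ) - n ≤ (L : ℝ) - 1 := by
          have h8 : (g : ℝ) ≤ (n : ℝ) + ((L : ℝ) - 1) := by
            have h9 : (g : ℕ) ≤ n + (L - 1) := hgn
            have hL1 : (1 : ℕ) ≤ L := hLpos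
            have h9R : ((g : ℕ) : ℝ) ≤ ((n + (L - 1) : ℕ) : ℝ) := Nat.cast_le.mpr h9
            rw [Nat.cast_add, Nat.cast_sub hL1, Nat.cast_one] at h9R
            linarith
          linarith
        exact div_le_div_of_nonneg_right h7 hmR.le
      have hstep := sum_B_ge x hxlow π hng hgm
      have hSg : e / 2 < ∑ j ∈ B m g, x (π j) := by linarith
      refine Finset.mem_biUnion.mpr ⟨t, Finset.mem_Icc.mpr ⟨ht1, htT⟩,
        Finset.mem_filter.mpr ⟨Finset.mem_univ _, ?_⟩⟩
      rw [hming]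
      exact lt_of_lt_of_le hSg (le_abs_self _)
    · -- downward crossing: grid point below
      set t : ℕ := n / L with ht
      obtain ⟨u, hu⟩ : ∃ u, u = t * L := ⟨_, rfl⟩
      have h1 : u ≤ n := by rw [hu]; exact Nat.div_mul_le_self _ _
      have h2 : n < u + L := by
        have := nat_lt_div_succ_mul n L hLpos
        rw [hu, ht]
        calc n < (n / L + 1) * L := this
          _ = n / L * L + L := by ring
      rcases Nat.eq_zero_or_pos t with h0 | ht1
      · -- impossible: the sum cannot drop below `-ε` that early
        exfalso
        rw [h0, zero_mul] at hu
        have hstep := sum_B_ge x hxlow π (Nat.zero_le n) hnm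
        have hB0 : ∑ j ∈ B m 0, x (π j) = 0 := by simp [B]
        rw [hB0] at hstep
        have h7 : ((n : ℝ) - 0) / m ≤ ((L : ℝ) - 1) / m := by
          have h8 : (n : ℝ) - 0 ≤ (L : ℝ) - 1 := by
            have h9 : n ≤ L - 1 := by omega
            have hL1 : (1 : ℕ) ≤ L := hLpos
            have h9R : ((n : ℕ) : ℝ) ≤ ((L - 1 : ℕ) : ℝ) := Nat.cast_le.mpr h9
            rw [Nat.cast_sub hL1, Nat.cast_one] at h9R
            linarith
          exact div_le_div_of_nonneg_right h8 hmR.le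
        linarith
      · have hum : u ≤ m := h1.trans hnm
        have hming : min (t * L) m = u := by rw [← hu]; exact min_eq_left (hu ▸ hum)
        have htT : t ≤ T := by
          rw [ht, hT]
          have h5 : n / L ≤ m / L := Nat.div_le_div_right hnm
          omega
        have hgapR : ((n : ℝ) - u) / m ≤ e / 2 := by
          refine le_trans ?_ hgap
          have h7 : (n : ℝ) - u ≤ (L : ℝ) - 1 := by
            have h9 : n - u ≤ L - 1 := by omega
            have hL1 : (1 : ℕ) ≤ L := hLpos
            have h9R : ((n - u : ℕ) : ℝ) ≤ ((L - 1 : ℕ) : ℝ) := Nat.cast_le.mpr h9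
            rw [Nat.cast_sub h1, Nat.cast_sub hL1, Nat.cast_one] at h9R
            linarith
          exact div_le_div_of_nonneg_right h7 hmR.le
        have hstep := sum_B_ge x hxlow π h1 hnm
        have hSg : e / 2 < -(∑ j ∈ B m u, x (π j)) := by linarith
        refine Finset.mem_biUnion.mpr ⟨t, Finset.mem_Icc.mpr ⟨ht1, htT⟩,
          Finset.mem_filter.mpr ⟨Finset.mem_univ _, ?_⟩⟩
        rw [hming]
        exact lt_of_lt_of_le hSg (neg_le_abs _)
  -- put the counting together
  have hcard2 : ((Finset.univ.filter (fun π : Equiv.Perm (Fin m) =>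
        ∃ i : Fin m, e < |∑ j ∈ Finset.Iic i, (q (π j) - 1 / (m : ℝ))|)).card : ℝ)
      ≤ (T : ℝ) * ((Fintype.card (Equiv.Perm (Fin m)) : ℝ) * δ / (e / 2) ^ 2) := by
    have h1 := (Finset.card_le_card hincl).trans Finset.card_biUnion_le
    calc ((Finset.univ.filter (fun π : Equiv.Perm (Fin m) =>
          ∃ i : Fin m, e < |∑ j ∈ Finset.Iic i, (q (π j) - 1 / (m : ℝ))|)).card : ℝ)
        ≤ ((∑ t ∈ Finset.Icc 1 T, (Finset.univ.filter
            (fun π : Equiv.Perm (Fin m) =>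
              e / 2 < |∑ j ∈ B m (min (t * L) m), x (π j)|)).card : ℕ) : ℝ) := by
          exact_mod_cast h1
      _ = ∑ t ∈ Finset.Icc 1 T, ((Finset.univ.filter
            (fun π : Equiv.Perm (Fin m) =>
              e / 2 < |∑ j ∈ B m (min (t * L) m), x (π j)|)).card : ℝ) := by
          push_cast
          rfl
      _ ≤ ∑ _t ∈ Finset.Icc 1 T,
            ((Fintype.card (Equiv.Perm (Fin m)) : ℝ) * δ / (e / 2) ^ 2) := by
          refine Finset.sum_le_sum fun t htmem => ?_
          obtain ⟨ht1, _⟩ := Finset.mem_Icc.mp htmem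
          refine count (min (t * L) m) ?_ (min_le_right _ _)
          have : 0 < t * L := Nat.mul_pos ht1 hLpos
          exact le_min this hm
      _ = (T : ℝ) * ((Fintype.card (Equiv.Perm (Fin m)) : ℝ) * δ / (e / 2) ^ 2) := by
          rw [Finset.sum_const, Nat.card_Icc, nsmul_eq_mul]
          norm_num
  have hTle : (T : ℝ) ≤ 3 / e := by
    have h1 : (T : ℝ) = ((m / L : ℕ) : ℝ) + 1 := by rw [hT]; push_cast; ring
    have h2 : ((m / L : ℕ) : ℝ) ≤ (m : ℝ) / (L : ℝ) := Nat.cast_div_le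
    have h3 : (m : ℝ) / (L : ℝ) ≤ 2 / e := by
      rw [div_le_div_iff₀ (by exact_mod_cast hLpos) hepos]
      nlinarith [hLreal]
    have h4 : (1 : ℝ) ≤ 1 / e := by rw [le_div_iff₀ hepos]; linarith
    have h5 : 2 / e + 1 / e = 3 / e := by ring
    linarith
  rw [div_lt_iff₀ hNpos]
  have hfinal : (T : ℝ) * ((Fintype.card (Equiv.Perm (Fin m)) : ℝ) * δ / (e / 2) ^ 2)
      ≤ e / 2 * (Fintype.card (Equiv.Perm (Fin m)) : ℝ) := by
    have hsimp : (Fintype.card (Equiv.Perm (Fin m)) : ℝ) * δ / (e / 2) ^ 2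
        = (Fintype.card (Equiv.Perm (Fin m)) : ℝ) * (e ^ 2 / 6) := by
      rw [hδ]
      field_simp
      ring
    rw [hsimp]
    have hpos6 : 0 ≤ (Fintype.card (Equiv.Perm (Fin m)) : ℝ) * (e ^ 2 / 6) := by positivity
    have hsc : (3 / e) * (e ^ 2 / 6) = e / 2 := by
      have he0 : e ≠ 0 := ne_of_gt hepos
      field_simp
      ring
    calc (T : ℝ) * ((Fintype.card (Equiv.Perm (Fin m)) : ℝ) * (e ^ 2 / 6))
        ≤ (3 / e) * ((Fintype.card (Equiv.Perm (Fin m)) : ℝ) * (e ^ 2 / 6)) :=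
          mul_le_mul_of_nonneg_right hTle hpos6
      _ = e / 2 * (Fintype.card (Equiv.Perm (Fin m)) : ℝ) := by
          rw [← hsc]
          ring
  have : e / 2 * (Fintype.card (Equiv.Perm (Fin m)) : ℝ)
      < e * (Fintype.card (Equiv.Perm (Fin m)) : ℝ) := by nlinarith
  linarith
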